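/- There exist a constant C > 0 and K₀ > 1 such that for all K ≥ K₀ and all 1 ≤ n ≤ n*(K): 1 ≤ u⁰_n ≤ C, where u⁰_n = 1 + ∑_{j=1}^{n−1} 1/(λ_j·π_j). -/

import Mathlib

open Filter MeasureTheory

noncomputable section

/-- Birth rate `λ_n = n · λ̃(n/K)`. -/
def lamK (lam : ℝ → ℝ) (K : ℝ) (n : ℕ) : ℝ := (n : ℝ) * lam ((n : ℝ) / K)

/-- Death rate `μ_n = n · μ̃(n/K)`. -/
def muK (mu : ℝ → ℝ) (K : ℝ) (n : ℕ) : ℝ := (n : ℝ) * mu ((n : ℝ) / K)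

/-- The weights `π_n = (λ₁⋯λ_{n-1})/(μ₁⋯μ_n)` (so `π₁ = 1/μ₁`). -/
def pik (lam mu : ℝ → ℝ) (K : ℝ) (n : ℕ) : ℝ :=
  (∏ j ∈ Finset.Icc 1 (n - 1), lamK lam K j) / (∏ j ∈ Finset.Icc 1 n, muK mu K j)

/-- `H(x) = ∫_{x*}^x log (μ̃(s)/λ̃(s)) ds`. -/
def Hfun (lam mu : ℝ → ℝ) (xs : ℝ) (x : ℝ) : ℝ :=
  ∫ s in xs..x, Real.log (mu s / lam s)

/-- `u⁰_n = 1 + ∑_{j=1}^{n-1} 1/(λ_j π_j)`. -/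
def u0 (lam mu : ℝ → ℝ) (K : ℝ) (n : ℕ) : ℝ :=
  1 + ∑ j ∈ Finset.Icc 1 (n - 1), 1 / (lamK lam K j * pik lam mu K j)

/-- Standing assumptions on the rate functions. -/
structure SA (lam mu : ℝ → ℝ) (xs : ℝ) : Prop where
  lam_pos : ∀ x : ℝ, 0 ≤ x → 0 < lam x
  mu_pos : ∀ x : ℝ, 0 ≤ x → 0 < mu x
  lam_diff : DifferentiableOn ℝ lam (Set.Ici (0 : ℝ))
  mu_diff : DifferentiableOn ℝ mu (Set.Ici (0 : ℝ))
  lam_mono : MonotoneOn lam (Set.Ici (0 : ℝ))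
  mu_mono : MonotoneOn mu (Set.Ici (0 : ℝ))
  ratio_lim : Tendsto (fun x : ℝ => lam x / mu x) atTop (nhds 0)
  mu0_pos : 0 < mu 0
  mu0_lt_lam0 : mu 0 < lam 0
  xs_pos : 0 < xs
  lam_eq_mu_xs : lam xs = mu xs
  xs_unique : ∀ x : ℝ, 0 < x → lam x = mu x → x = xs
  mu_logderiv_bdd : ∃ M : ℝ, ∀ x : ℝ, 0 ≤ x → deriv mu x / mu x ≤ M
  logratio_mono : MonotoneOn (fun x : ℝ => Real.log (mu x / lam x)) (Set.Ici (0 : ℝ))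

private lemma Icc_one_eq_Ioc (b : ℕ) : Finset.Icc 1 b = Finset.Ioc 0 b := by
  ext x; simp only [Finset.mem_Icc, Finset.mem_Ioc]; omega

/-- The key product identity: `1/(λ_j π_j) = ∏_{i=1}^j μ̃(i/K)/λ̃(i/K)`. -/
private lemma lamK_pik_inv (lam mu : ℝ → ℝ) (K : ℝ) (hK : 0 < K)
    (hlam : ∀ x : ℝ, 0 ≤ x → 0 < lam x) (hmu : ∀ x : ℝ, 0 ≤ x → 0 < mu x)
    {j : ℕ} (hj : 1 ≤ j) :
    1 / (lamK lam K j * pik lam mu K j)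
      = ∏ i ∈ Finset.Icc 1 j, (mu ((i : ℝ) / K) / lam ((i : ℝ) / K)) := by
  obtain ⟨k, rfl⟩ := Nat.exists_eq_succ_of_ne_zero (by omega : j ≠ 0)
  have h1 : lamK lam K (k + 1) * pik lam mu K (k + 1)
      = (∏ i ∈ Finset.Icc 1 (k + 1), lamK lam K i)
        / (∏ i ∈ Finset.Icc 1 (k + 1), muK mu K i) := by
    unfold pik
    rw [Finset.prod_Icc_succ_top (Nat.le_add_left 1 k) (lamK lam K)]
    simp only [Nat.add_sub_cancel]
    ring
  rw [h1, one_div_div, ← Finset.prod_div_distrib]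
  refine Finset.prod_congr rfl fun i hi => ?_
  have hi1 : 1 ≤ i := (Finset.mem_Icc.1 hi).1
  have hi0 : ((i : ℝ)) ≠ 0 := Nat.cast_ne_zero.2 (by omega)
  simp only [muK, lamK]
  rw [mul_div_mul_left _ _ hi0]

/-- For `K` large and `1 ≤ n ≤ n*(K)`, `1 ≤ u⁰_n ≤ C`. -/
theorem stmt_16 (lam mu : ℝ → ℝ) (xs : ℝ) (hSA : SA lam mu xs) :
    ∃ C : ℝ, 0 < C ∧ ∃ K₀ : ℝ, 1 < K₀ ∧ ∀ K : ℝ, K₀ ≤ K →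
      ∀ n : ℕ, 1 ≤ n → n ≤ Nat.floor (xs * K) →
        1 ≤ u0 lam mu K n ∧ u0 lam mu K n ≤ C := by
  have hxs := hSA.xs_pos
  have hx2 : (0:ℝ) ≤ xs / 2 := by linarith
  set r : ℝ := mu (xs/2) / lam (xs/2) with hrdef
  have hr0 : 0 < r := div_pos (hSA.mu_pos _ hx2) (hSA.lam_pos _ hx2)
  -- ratio bounds
  have hratio1 : ∀ x : ℝ, 0 ≤ x → x ≤ xs → mu x / lam x ≤ 1 := by
    intro x hx0 hxle
    have h := hSA.logratio_mono (Set.mem_Ici.2 hx0) (Set.mem_Ici.2 hxs.le) hxle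
    dsimp only at h
    have h2 : mu xs / lam xs = 1 := by
      rw [hSA.lam_eq_mu_xs]; exact div_self (ne_of_gt (hSA.mu_pos _ hxs.le))
    rw [h2, Real.log_one] at h
    exact (Real.log_nonpos_iff (div_pos (hSA.mu_pos _ hx0) (hSA.lam_pos _ hx0)).le).1 h
  have hratior : ∀ x : ℝ, 0 ≤ x → x ≤ xs / 2 → mu x / lam x ≤ r := by
    intro x hx0 hxle
    have h := hSA.logratio_mono (Set.mem_Ici.2 hx0) (Set.mem_Ici.2 hx2) hxle
    dsimp only at h
    exact (Real.log_le_log_iff (div_pos (hSA.mu_pos _ hx0) (hSA.lam_pos _ hx0)) hr0).1 h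
  have hr1 : r < 1 := by
    rcases lt_or_eq_of_le (hratio1 _ hx2 (by linarith)) with h | h
    · exact h
    · exfalso
      have heq : mu (xs/2) = lam (xs/2) :=
        (div_eq_one_iff_eq (ne_of_gt (hSA.lam_pos _ hx2))).1 h
      have := hSA.xs_unique (xs/2) (by linarith) heq.symm
      linarith
  have h1r : (0:ℝ) < 1 - r := by linarith
  -- tendsto fact giving N
  have hrabs : ‖r‖ < 1 := by rw [Real.norm_eq_abs, abs_of_pos hr0]; exact hr1
  have hsum : Summable (fun n : ℕ => (n:ℝ)^1 * r^n) :=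
    summable_pow_mul_geometric_of_norm_lt_one 1 hrabs
  have ht1 : Tendsto (fun n : ℕ => (n:ℝ) * r^n) atTop (nhds 0) := by
    simpa using hsum.tendsto_atTop_zero
  have ht2 : Tendsto (fun n : ℕ => r^n) atTop (nhds 0) :=
    tendsto_pow_atTop_nhds_zero_of_lt_one hr0.le hr1
  have ht : Tendsto (fun n : ℕ => (2*(n:ℝ)+2) * r^n) atTop (nhds 0) := by
    have heq : (fun n : ℕ => (2*(n:ℝ)+2) * r^n)
        = fun n : ℕ => 2*((n:ℝ)*r^n) + 2*r^n := by funext n; ring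
    rw [heq]
    simpa using (ht1.const_mul 2).add (ht2.const_mul 2)
  obtain ⟨N, hN⟩ := Filter.eventually_atTop.mp
    (ht.eventually (gt_mem_nhds (by norm_num : (0:ℝ) < 1)))
  set N' : ℕ := max N 1 with hN'def
  refine ⟨2 + 1/(1-r), by positivity, max 2 (2*((N':ℝ)+1)/xs),
    lt_of_lt_of_le one_lt_two (le_max_left _ _), ?_⟩
  intro K hK n hn1 hn2
  have hK2 : (2:ℝ) ≤ K := le_trans (le_max_left _ _) hK
  have hK0 : (0:ℝ) < K := by linarith
  have hKN : 2*((N':ℝ)+1)/xs ≤ K := le_trans (le_max_right _ _) hK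
  set m : ℕ := Nat.floor (xs*K/2) with hmdef
  have hxK : (0:ℝ) ≤ xs*K/2 := by positivity
  have hmle : (m:ℝ) ≤ xs*K/2 := Nat.floor_le hxK
  have hmlt : xs*K/2 < (m:ℝ) + 1 := Nat.lt_floor_add_one _
  have hmN : N' ≤ m := by
    apply Nat.le_floor
    rw [div_le_iff₀ hxs] at hKN
    nlinarith
  have hnK : ((n:ℝ)) ≤ xs * K :=
    le_trans (Nat.cast_le.2 hn2) (Nat.floor_le (by positivity))
  -- pointwise bounds on the ratio at i/K
  have hρ0 : ∀ i : ℕ, (0:ℝ) ≤ mu ((i:ℝ)/K) / lam ((i:ℝ)/K) := fun i =>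
    le_of_lt (div_pos (hSA.mu_pos _ (by positivity)) (hSA.lam_pos _ (by positivity)))
  have hρ1 : ∀ i : ℕ, i ≤ n - 1 → mu ((i:ℝ)/K) / lam ((i:ℝ)/K) ≤ 1 := by
    intro i hi
    apply hratio1 _ (by positivity)
    rw [div_le_iff₀ hK0]
    have h1 : ((i:ℝ)) ≤ (n:ℝ) := Nat.cast_le.2 (le_trans hi (Nat.sub_le n 1))
    linarith
  have hρr : ∀ i : ℕ, i ≤ m → mu ((i:ℝ)/K) / lam ((i:ℝ)/K) ≤ r := by
    intro i hi
    apply hratior _ (by positivity)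
    rw [div_le_iff₀ hK0]
    have h1 : ((i:ℝ)) ≤ (m:ℝ) := Nat.cast_le.2 hi
    linarith
  have hprod_r : ∀ s : ℕ, s ≤ m →
      (∏ i ∈ Finset.Icc 1 s, (mu ((i:ℝ)/K) / lam ((i:ℝ)/K))) ≤ r^s := by
    intro s hs
    calc (∏ i ∈ Finset.Icc 1 s, (mu ((i:ℝ)/K) / lam ((i:ℝ)/K)))
        ≤ ∏ _i ∈ Finset.Icc 1 s, r := by
          refine Finset.prod_le_prod (fun i _ => hρ0 i) (fun i hi => ?_)
          exact hρr i (le_trans (Finset.mem_Icc.1 hi).2 hs)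
      _ = r^s := by rw [Finset.prod_const, Nat.card_Icc, Nat.add_sub_cancel]
  -- term bound
  have hterm : ∀ j ∈ Finset.Icc 1 (n-1),
      1 / (lamK lam K j * pik lam mu K j) ≤ r^j + r^m := by
    intro j hj
    obtain ⟨hj1, hj2⟩ := Finset.mem_Icc.1 hj
    rw [lamK_pik_inv lam mu K hK0 hSA.lam_pos hSA.mu_pos hj1]
    rcases le_or_gt j m with hjm | hjm
    · exact le_trans (hprod_r j hjm) (le_add_of_nonneg_right (pow_nonneg hr0.le m))
    · have hsplit := Finset.prod_Ioc_consecutive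
        (fun i : ℕ => mu ((i:ℝ)/K) / lam ((i:ℝ)/K)) (Nat.zero_le m) hjm.le
      rw [Icc_one_eq_Ioc, ← hsplit]
      have hA : (∏ i ∈ Finset.Ioc 0 m, (mu ((i:ℝ)/K) / lam ((i:ℝ)/K))) ≤ r^m := by
        rw [← Icc_one_eq_Ioc]; exact hprod_r m le_rfl
      have hB : (∏ i ∈ Finset.Ioc m j, (mu ((i:ℝ)/K) / lam ((i:ℝ)/K))) ≤ 1 := by
        refine Finset.prod_le_one (fun i _ => hρ0 i) (fun i hi => ?_)
        exact hρ1 i (le_trans (Finset.mem_Ioc.1 hi).2 hj2)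
      calc (∏ i ∈ Finset.Ioc 0 m, (mu ((i:ℝ)/K) / lam ((i:ℝ)/K)))
            * (∏ i ∈ Finset.Ioc m j, (mu ((i:ℝ)/K) / lam ((i:ℝ)/K)))
          ≤ r^m * 1 := mul_le_mul hA hB
            (Finset.prod_nonneg fun i _ => hρ0 i) (pow_nonneg hr0.le m)
        _ = r^m := mul_one _
        _ ≤ r^j + r^m := le_add_of_nonneg_left (pow_nonneg hr0.le j)
  -- sum bounds
  have hgeom : (∑ j ∈ Finset.Icc 1 (n-1), r^j) ≤ 1/(1-r) := by
    have hsub : Finset.Icc 1 (n-1) ⊆ Finset.range n := by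
      intro i hi
      rw [Finset.mem_range]
      have := (Finset.mem_Icc.1 hi).2
      omega
    have h1 : (∑ j ∈ Finset.Icc 1 (n-1), r^j) ≤ ∑ j ∈ Finset.range n, r^j :=
      Finset.sum_le_sum_of_subset_of_nonneg hsub (fun i _ _ => pow_nonneg hr0.le i)
    have h2 : (∑ j ∈ Finset.range n, r^j) = (1 - r^n)/(1-r) := by
      rw [geom_sum_eq (ne_of_lt hr1),
        show (1:ℝ) - r^n = -(r^n - 1) by ring, show (1:ℝ) - r = -(r - 1) by ring,
        neg_div_neg_eq]
    rw [h2] at h1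
    exact le_trans h1 ((div_le_div_iff_of_pos_right h1r).2 (by nlinarith [pow_nonneg hr0.le n]))
  have hlast : ((n-1:ℕ):ℝ) * r^m ≤ 1 := by
    have h1 : ((n-1:ℕ):ℝ) ≤ xs*K := le_trans (Nat.cast_le.2 (Nat.sub_le n 1)) hnK
    have h2 : xs*K ≤ 2*(m:ℝ)+2 := by linarith
    calc ((n-1:ℕ):ℝ) * r^m ≤ (2*(m:ℝ)+2) * r^m :=
          mul_le_mul_of_nonneg_right (h1.trans h2) (pow_nonneg hr0.le m)
      _ ≤ 1 := le_of_lt (hN m (le_trans (le_max_left N 1) hmN))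
  have hsum_nonneg : (0:ℝ) ≤ ∑ j ∈ Finset.Icc 1 (n-1),
      1 / (lamK lam K j * pik lam mu K j) := by
    refine Finset.sum_nonneg fun j hj => ?_
    rw [lamK_pik_inv lam mu K hK0 hSA.lam_pos hSA.mu_pos (Finset.mem_Icc.1 hj).1]
    exact Finset.prod_nonneg fun i _ => hρ0 i
  have hsum_le : (∑ j ∈ Finset.Icc 1 (n-1), 1 / (lamK lam K j * pik lam mu K j))
      ≤ (∑ j ∈ Finset.Icc 1 (n-1), r^j) + ((n-1:ℕ):ℝ) * r^m := by
    calc (∑ j ∈ Finset.Icc 1 (n-1), 1 / (lamK lam K j * pik lam mu K j))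
        ≤ ∑ j ∈ Finset.Icc 1 (n-1), (r^j + r^m) := Finset.sum_le_sum hterm
      _ = (∑ j ∈ Finset.Icc 1 (n-1), r^j) + ((n-1:ℕ):ℝ) * r^m := by
          rw [Finset.sum_add_distrib, Finset.sum_const, Nat.card_Icc,
            Nat.add_sub_cancel, nsmul_eq_mul]
  constructor
  · unfold u0; linarith
  · unfold u0; linarith
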